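/- Let ω = (ω₁, ω₂) ∈ ℝ² satisfy the (ν,τ)-Diophantine condition |ω₁ z₁ + ω₂ z₂| ≥ ν (|z₁|+|z₂|)^{-τ} for all z ∈ ℤ² \ {0}, with ν > 0, τ > 0. Then for every ε > 0 there is a constant b₄ = b₄(ω, ν, τ) such that the orbit segment { θ + ωs mod ℤ² : 0 ≤ s ≤ b₄ / ε^τ } is ε-dense in the 2-torus 𝕋² = ℝ²/ℤ² for every θ ∈ ℝ², i.e., every point of 𝕋² is within ℓ¹-distance ε of some point of the segment. -/

import Mathlib

lemma rot_dense (α c τ : ℝ) (hc : 0 < c) (hτ : 0 < τ)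
    (h : ∀ k : ℤ, k ≠ 0 → ∀ m : ℤ, c * ((|k| : ℤ) : ℝ) ^ (-τ) ≤ |(k : ℝ) * α - (m : ℝ)|) :
    ∃ C > 0, ∀ ε ∈ Set.Ioc (0:ℝ) 1, ∀ x : ℝ, ∃ k : ℕ, ∃ m : ℤ,
      (k : ℝ) ≤ C / ε ^ τ ∧ |x - (k : ℝ) * α - (m : ℝ)| ≤ ε := by
  obtain ⟨B, hBdef⟩ : ∃ B : ℝ, B = (2:ℝ) ^ τ := ⟨_, rfl⟩
  have hB1 : 1 < B := by
    rw [hBdef]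
    exact (Real.one_lt_rpow_iff_of_pos (by norm_num)).mpr (Or.inl ⟨by norm_num, hτ⟩)
  have hB0 : 0 < B := lt_trans one_pos hB1
  have hB10 : B - 1 ≠ 0 := by linarith
  have hc0 : c ≠ 0 := hc.ne'
  have hpow : ∀ M : ℕ, ((2:ℝ) ^ M : ℝ) ^ τ = B ^ M := by
    intro M
    rw [← Real.rpow_natCast 2 M, ← Real.rpow_natCast B M, hBdef,
      ← Real.rpow_mul (by norm_num), ← Real.rpow_mul (by norm_num), mul_comm]
  obtain ⟨A, hAdef⟩ : ∃ A : ℝ, A = 1 + 4 * B / (c * (B - 1)) := ⟨_, rfl⟩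
  have hA1 : 1 ≤ A := by
    have h0 : 0 < 4 * B / (c * (B - 1)) := by
      apply div_pos (by positivity)
      exact mul_pos hc (by linarith)
    linarith [hAdef.ge, hAdef.le]
  have hA0 : 0 < A := lt_of_lt_of_le one_pos hA1
  have key : ∀ n : ℕ, ∀ x : ℝ, ∃ k : ℕ, ∃ m : ℤ,
      (k : ℝ) ≤ A * B ^ n ∧ |x - (k : ℝ) * α - (m : ℝ)| ≤ ((2:ℝ) ^ n)⁻¹ := by
    intro n
    induction n with
    | zero =>
      intro x
      refine ⟨0, round x, by simpa using hA0.le, ?_⟩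
      have h1 := abs_sub_round x
      simp only [Nat.cast_zero, zero_mul, sub_zero, pow_zero, inv_one]
      linarith
    | succ n ih =>
      intro x
      obtain ⟨j, q, hq0, hqN, hjq⟩ :=
        Real.exists_int_int_abs_mul_sub_le α (n := 2 ^ (n+1)) (by positivity)
      obtain ⟨d, hddef⟩ : ∃ d : ℝ, d = (q : ℝ) * α - (j : ℝ) := ⟨_, rfl⟩
      have hq0' : (0:ℝ) < (q:ℝ) := by exact_mod_cast hq0
      have hqτ : c * ((q:ℝ)) ^ (-τ) ≤ |d| := by
        have h2 := h q (by exact_mod_cast hq0.ne') j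
        rw [abs_of_pos hq0] at h2
        rwa [hddef]
      have hδ0 : 0 < |d| := lt_of_lt_of_le (by positivity) hqτ
      have hd0 : d ≠ 0 := by simpa [abs_pos] using hδ0
      have hqle : (q:ℝ) ≤ (2:ℝ)^(n+1) := by exact_mod_cast hqN
      have hδle : |d| ≤ ((2:ℝ) ^ (n+1))⁻¹ := by
        rw [hddef]
        refine hjq.trans ?_
        rw [one_div]
        apply inv_anti₀ (by positivity)
        push_cast
        linarith
      obtain ⟨en, hendef⟩ : ∃ en : ℝ, en = ((2:ℝ) ^ n)⁻¹ := ⟨_, rfl⟩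
      have hen0 : 0 < en := by rw [hendef]; positivity
      obtain ⟨s, hsdef⟩ : ∃ s : ℝ, s = if 0 < d then (1:ℝ) else -1 := ⟨_, rfl⟩
      obtain ⟨k₀, m₀, hk₀, hy⟩ := ih (x - s * en)
      obtain ⟨y, hydef⟩ : ∃ y : ℝ, y = (k₀ : ℝ) * α + (m₀ : ℝ) := ⟨_, rfl⟩
      have hy' : |x - s * en - y| ≤ en := by
        have e : x - s * en - y = x - s * en - (k₀:ℝ) * α - (m₀:ℝ) := by rw [hydef]; ring
        rw [e]
        exact le_trans hy (le_of_eq hendef.symm)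
      have h1 : 0 ≤ (x - y) / d ∧ (x - y) / d ≤ 2 * en / |d| := by
        rcases lt_or_ge 0 d with hd | hd
        · rw [hsdef, if_pos hd] at hy'
          obtain ⟨ha, hb⟩ := abs_le.mp hy'
          rw [abs_of_pos hd]
          constructor
          · apply div_nonneg _ hd.le; linarith
          · gcongr <;> linarith
        · have hd' : d < 0 := lt_of_le_of_ne hd hd0
          rw [hsdef, if_neg (not_lt.mpr hd)] at hy'
          obtain ⟨ha, hb⟩ := abs_le.mp hy'
          have he : (x - y) / d = (y - x) / (-d) := by
            rw [div_neg, ← neg_div, neg_sub]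
          rw [abs_of_neg hd', he]
          constructor
          · apply div_nonneg _ (by linarith); linarith
          · gcongr <;> linarith
      obtain ⟨i, hidef⟩ : ∃ i : ℤ, i = ⌊(x - y) / d⌋ := ⟨_, rfl⟩
      have hi0 : 0 ≤ i := by rw [hidef]; exact Int.floor_nonneg.mpr h1.1
      have hi' : ((i.toNat : ℕ) : ℝ) = (i : ℝ) := by exact_mod_cast Int.toNat_of_nonneg hi0
      have hq' : ((q.toNat : ℕ) : ℝ) = (q : ℝ) := by exact_mod_cast Int.toNat_of_nonneg hq0.le
      have hiub : (i:ℝ) ≤ 2 * en / |d| := by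
        rw [hidef]; exact (Int.floor_le _).trans h1.2
      have hrem : |x - y - (i:ℝ) * d| ≤ |d| := by
        have he : x - y - (i:ℝ) * d = d * ((x - y)/d - i) := by
          field_simp
        rw [he, abs_mul]
        have hf1 : 0 ≤ (x - y)/d - (i:ℝ) := by
          rw [hidef]; exact sub_nonneg.mpr (Int.floor_le _)
        have hf2 : (x - y)/d - (i:ℝ) ≤ 1 := by
          rw [hidef]; linarith [Int.lt_floor_add_one ((x - y)/d)]
        calc |d| * |(x - y)/d - i| = |d| * ((x - y)/d - i) := by rw [abs_of_nonneg hf1]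
          _ ≤ |d| * 1 := by gcongr
          _ = |d| := mul_one _
      refine ⟨k₀ + i.toNat * q.toNat, m₀ - i * j, ?_, ?_⟩
      · -- bound on k
        have hcast : ((k₀ + i.toNat * q.toNat : ℕ) : ℝ) = (k₀:ℝ) + (i:ℝ) * (q:ℝ) := by
          push_cast
          rw [hi', hq']
        rw [hcast]
        have hinv : (1:ℝ)/|d| ≤ (q:ℝ)^τ / c := by
          rw [div_le_div_iff₀ hδ0 hc]
          have hone : (q:ℝ)^(-τ) * (q:ℝ)^τ = 1 := by
            rw [← Real.rpow_add hq0']; simp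
          calc 1 * c = c * ((q:ℝ)^(-τ) * (q:ℝ)^τ) := by rw [hone]; ring
            _ = (c * (q:ℝ)^(-τ)) * (q:ℝ)^τ := by ring
            _ ≤ |d| * (q:ℝ)^τ := by
                apply mul_le_mul_of_nonneg_right hqτ (Real.rpow_nonneg hq0'.le _)
            _ = (q:ℝ)^τ * |d| := mul_comm _ _
        have hqτ2 : (q:ℝ)^τ ≤ B^(n+1) := by
          rw [← hpow (n+1)]
          exact Real.rpow_le_rpow hq0'.le hqle hτ.le
        have hstep : (i:ℝ) * (q:ℝ) ≤ 4 * B^(n+1) / c := by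
          calc (i:ℝ) * (q:ℝ) ≤ (2 * en / |d|) * (q:ℝ) := by
                apply mul_le_mul_of_nonneg_right hiub hq0'.le
            _ = 2 * en * (q:ℝ) * (1/|d|) := by ring
            _ ≤ 2 * en * (q:ℝ) * ((q:ℝ)^τ / c) := by
                apply mul_le_mul_of_nonneg_left hinv (by positivity)
            _ ≤ 2 * en * (2:ℝ)^(n+1) * (B^(n+1) / c) := by
                gcongr
            _ = 4 * B^(n+1) / c := by
                rw [hendef, pow_succ]
                have h2n0 : ((2:ℝ)^n) ≠ 0 := by positivity
                field_simp
                ring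
        have hABn : A * B^n + 4 * B^(n+1) / c ≤ A * B^(n+1) := by
          have h4 : A * B - A - 4 * B / c = B - 1 := by
            rw [hAdef]
            field_simp
            ring
          have h5 : A * B^(n+1) - (A * B^n + 4 * B^(n+1)/c) = B^n * (A*B - A - 4*B/c) := by
            rw [pow_succ]
            field_simp
            ring
          have h6 : (0:ℝ) ≤ B^n * (A*B - A - 4*B/c) := by
            rw [h4]
            exact mul_nonneg (pow_nonneg hB0.le n) (by linarith)
          linarith
        linarith
      · -- remainder bound
        have hval : x - ((k₀ + i.toNat * q.toNat : ℕ):ℝ) * α - ((m₀ - i * j : ℤ):ℝ)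
            = x - y - (i:ℝ) * d := by
          push_cast
          rw [hi', hq', hydef, hddef]
          ring
        rw [hval]
        exact hrem.trans hδle
  -- endgame
  refine ⟨A * B, by positivity, ?_⟩
  rintro ε ⟨hε0, hε1⟩ x
  have hex : ∃ n : ℕ, ((2:ℝ)^n)⁻¹ ≤ ε := by
    obtain ⟨n, hn⟩ := exists_pow_lt_of_lt_one hε0 (by norm_num : (2:ℝ)⁻¹ < 1)
    exact ⟨n, by rw [← inv_pow]; exact hn.le⟩
  obtain ⟨n, hn1, hn2⟩ : ∃ n : ℕ, ((2:ℝ)^n)⁻¹ ≤ ε ∧ ε ≤ 2 * ((2:ℝ)^n)⁻¹ := by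
    refine ⟨Nat.find hex, Nat.find_spec hex, ?_⟩
    by_cases h0 : Nat.find hex = 0
    · rw [h0]
      norm_num
      linarith
    · obtain ⟨p, hp⟩ := Nat.exists_eq_succ_of_ne_zero h0
      have hlt := Nat.find_min hex (m := p) (by omega)
      push_neg at hlt
      rw [hp, pow_succ, mul_inv]
      have heq : 2 * (((2:ℝ)^p)⁻¹ * 2⁻¹) = ((2:ℝ)^p)⁻¹ := by ring
      rw [heq]
      exact hlt.le
  obtain ⟨k, m, hk, hxm⟩ := key n x
  refine ⟨k, m, ?_, hxm.trans hn1⟩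
  have h2n : (2:ℝ)^n ≤ 2 / ε := by
    rw [le_div_iff₀ hε0]
    calc (2:ℝ)^n * ε ≤ (2:ℝ)^n * (2 * ((2:ℝ)^n)⁻¹) := by gcongr
      _ = 2 := by field_simp
  have hBn : B^n ≤ B / ε^τ := by
    rw [← hpow n, hBdef]
    calc ((2:ℝ)^n)^τ ≤ (2/ε)^τ := Real.rpow_le_rpow (by positivity) h2n hτ.le
      _ = (2:ℝ)^τ / ε^τ := Real.div_rpow (by norm_num) hε0.le τ
  calc (k:ℝ) ≤ A * B^n := hk
    _ ≤ A * (B / ε^τ) := by gcongr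
    _ = A * B / ε^τ := by ring


theorem stmt_16 (ν τ : ℝ) (hν : 0 < ν) (hτ : 0 < τ) (ω : ℝ × ℝ)
    (hdio : ∀ z : ℤ × ℤ, z ≠ 0 →
      ν * (((|z.1| + |z.2| : ℤ) : ℝ)) ^ (-τ) ≤ |ω.1 * (z.1 : ℝ) + ω.2 * (z.2 : ℝ)|) :
    ∃ b₄ > 0, ∀ ε > 0, ∀ θ p : ℝ × ℝ, ∃ s ∈ Set.Icc (0:ℝ) (b₄ / ε ^ τ),
      ∃ z : ℤ × ℤ,
        |p.1 - (θ.1 + ω.1 * s) - (z.1 : ℝ)| + |p.2 - (θ.2 + ω.2 * s) - (z.2 : ℝ)| ≤ ε := by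
  have hω1 : ν ≤ |ω.1| := by
    have h1 := hdio (1, 0) (by simp)
    norm_num at h1
    simpa using h1
  have hω1ne : ω.1 ≠ 0 := by
    intro h0
    rw [h0, abs_zero] at hω1
    linarith
  have hω1pos : 0 < |ω.1| := abs_pos.mpr hω1ne
  obtain ⟨α, hαdef⟩ : ∃ a : ℝ, a = ω.2 / ω.1 := ⟨_, rfl⟩
  obtain ⟨K, hKdef⟩ : ∃ K : ℝ, K = 3 + 2 * |α| := ⟨_, rfl⟩
  have hK3 : 3 ≤ K := by rw [hKdef]; nlinarith [abs_nonneg α]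
  have hK0 : 0 < K := by linarith
  obtain ⟨c, hcdef⟩ : ∃ c : ℝ, c = min ((ν / |ω.1|) * K ^ (-τ)) 1 := ⟨_, rfl⟩
  have hc : 0 < c := by
    rw [hcdef]
    apply lt_min _ one_pos
    apply mul_pos (div_pos hν hω1pos) (Real.rpow_pos_of_pos hK0 _)
  have hc1 : c ≤ 1 := by rw [hcdef]; exact min_le_right _ _
  have hcK : c ≤ (ν / |ω.1|) * K ^ (-τ) := by rw [hcdef]; exact min_le_left _ _
  -- Diophantine property of the rotation number α
  have hα : ∀ k : ℤ, k ≠ 0 → ∀ m : ℤ, c * ((|k| : ℤ) : ℝ) ^ (-τ) ≤ |(k : ℝ) * α - (m : ℝ)| := by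
    intro k hk m
    have hk1 : (1:ℝ) ≤ ((|k| : ℤ) : ℝ) := by exact_mod_cast Int.one_le_abs hk
    have hk0' : (0:ℝ) < ((|k| : ℤ) : ℝ) := by linarith
    have hkabs : |(k:ℝ)| = ((|k| : ℤ) : ℝ) := by push_cast; ring
    have hbase : |(k:ℝ) * α - (m:ℝ)| = |ω.2 * k - ω.1 * m| / |ω.1| := by
      rw [hαdef]
      rw [← abs_div]
      congr 1
      field_simp
    have hd := hdio (-m, k) (by
      intro hcontr
      apply hk
      simpa using congrArg Prod.snd hcontr)
    simp only at hd
    have hd' : ν * (((|m| + |k| : ℤ)) : ℝ) ^ (-τ) ≤ |ω.2 * k - ω.1 * m| := by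
      have e1 : (|(-m)| + |k| : ℤ) = (|m| + |k| : ℤ) := by rw [abs_neg]
      rw [e1] at hd
      have e2 : |ω.1 * ((-m : ℤ) : ℝ) + ω.2 * (k : ℝ)| = |ω.2 * k - ω.1 * m| := by
        push_cast
        congr 1
        ring
      rwa [e2] at hd
    rcases le_or_gt ((|m| : ℤ) : ℝ) ((2 + 2*|α|) * ((|k| : ℤ) : ℝ)) with hm | hm
    · -- main case
      have hsum0 : (0:ℝ) < ((|m| + |k| : ℤ) : ℝ) := by
        have h0 := abs_nonneg (m:ℝ)
        have hk0'' := hk0'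
        push_cast
        push_cast at hk0''
        linarith
      have hsum : ((|m| + |k| : ℤ) : ℝ) ≤ K * ((|k| : ℤ) : ℝ) := by
        have hm' := hm
        have hk1' := hk1
        push_cast
        push_cast at hm' hk1'
        rw [hKdef]
        nlinarith [abs_nonneg α]
      have hanti : (K * ((|k| : ℤ) : ℝ)) ^ (-τ) ≤ (((|m| + |k| : ℤ)) : ℝ) ^ (-τ) :=
        Real.rpow_le_rpow_of_nonpos hsum0 hsum (by linarith)
      have hmulr : (K * ((|k| : ℤ) : ℝ)) ^ (-τ) = K ^ (-τ) * ((|k| : ℤ) : ℝ) ^ (-τ) :=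
        Real.mul_rpow hK0.le (by positivity)
      rw [hbase]
      rw [le_div_iff₀ hω1pos]
      calc c * ((|k| : ℤ) : ℝ) ^ (-τ) * |ω.1|
          ≤ ((ν / |ω.1|) * K ^ (-τ)) * ((|k| : ℤ) : ℝ) ^ (-τ) * |ω.1| := by
            apply mul_le_mul_of_nonneg_right _ hω1pos.le
            apply mul_le_mul_of_nonneg_right hcK (by positivity)
        _ = ν * (K ^ (-τ) * ((|k| : ℤ) : ℝ) ^ (-τ)) := by field_simp
        _ = ν * (K * ((|k| : ℤ) : ℝ)) ^ (-τ) := by rw [hmulr]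
        _ ≤ ν * (((|m| + |k| : ℤ)) : ℝ) ^ (-τ) := by
            apply mul_le_mul_of_nonneg_left hanti hν.le
        _ ≤ |ω.2 * k - ω.1 * m| := hd'
    · -- |m| large: trivial case
      have h1 : c * ((|k| : ℤ) : ℝ) ^ (-τ) ≤ 1 := by
        calc c * ((|k| : ℤ) : ℝ) ^ (-τ) ≤ 1 * 1 := by
              apply mul_le_mul hc1 (Real.rpow_le_one_of_one_le_of_nonpos hk1 (by linarith))
                (by positivity) one_pos.le
          _ = 1 := mul_one 1
      refine h1.trans ?_
      have h2 : |(k:ℝ) * α| ≤ |α| * ((|k| : ℤ) : ℝ) := by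
        rw [abs_mul, hkabs, mul_comm]
      have h3 : ((|m| : ℤ) : ℝ) - |(k:ℝ) * α| ≤ |(k:ℝ) * α - m| := by
        have := abs_sub_abs_le_abs_sub ((m:ℝ)) ((k:ℝ) * α)
        have habs : |(m:ℝ)| = ((|m| : ℤ) : ℝ) := by push_cast; ring
        rw [habs] at this
        calc ((|m| : ℤ) : ℝ) - |(k:ℝ)*α| ≤ |(m:ℝ) - (k:ℝ)*α| := this
          _ = |(k:ℝ)*α - m| := abs_sub_comm _ _
      have : (1:ℝ) ≤ |(k:ℝ) * α - m| := by
        linarith [h3, hm, h2, hk1, mul_nonneg (abs_nonneg α) (le_of_lt hk0')]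
      linarith
  -- Diophantine property for -α
  have hα' : ∀ k : ℤ, k ≠ 0 → ∀ m : ℤ, c * ((|k| : ℤ) : ℝ) ^ (-τ) ≤ |(k : ℝ) * (-α) - (m : ℝ)| := by
    intro k hk m
    have := hα k hk (-m)
    have e : |(k:ℝ) * (-α) - (m:ℝ)| = |(k:ℝ) * α - ((-m : ℤ) : ℝ)| := by
      push_cast
      rw [← abs_neg]
      congr 1
      ring
    rw [e]
    exact this
  obtain ⟨C₁, hC₁0, hC₁⟩ := rot_dense α c τ hc hτ hα
  obtain ⟨C₂, hC₂0, hC₂⟩ := rot_dense (-α) c τ hc hτ hα'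
  obtain ⟨C, hCdef⟩ : ∃ C : ℝ, C = max C₁ C₂ := ⟨_, rfl⟩
  have hC0 : 0 < C := by rw [hCdef]; exact lt_max_of_lt_left hC₁0
  refine ⟨(1 + C) / |ω.1| + 1, by positivity, ?_⟩
  intro ε hε θ p
  have hετ : 0 < ε ^ τ := Real.rpow_pos_of_pos hε τ
  by_cases hε1 : ε ≤ 1
  · -- main case: use the rotation density
    have hετ1 : ε ^ τ ≤ 1 := Real.rpow_le_one hε.le hε1 hτ.le
    have hbub : ∀ k : ℝ, 0 ≤ k → k ≤ C / ε ^ τ → (k + 1) / |ω.1| ≤ ((1 + C) / |ω.1| + 1) / ε ^ τ := by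
      intro k hk0 hkC
      have h1 : k + 1 ≤ (1 + C) / ε ^ τ := by
        have h2 : (1:ℝ) ≤ 1 / ε ^ τ := by
          rw [le_div_iff₀ hετ]; linarith
        calc k + 1 ≤ C / ε ^ τ + 1 / ε ^ τ := by linarith
          _ = (1 + C) / ε ^ τ := by rw [← add_div, add_comm]
      calc (k + 1) / |ω.1| ≤ ((1 + C) / ε ^ τ) / |ω.1| := by gcongr
        _ = ((1 + C) / |ω.1|) / ε ^ τ := div_right_comm _ _ _
        _ ≤ ((1 + C) / |ω.1| + 1) / ε ^ τ := by gcongr; linarith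
    rcases lt_or_gt_of_ne hω1ne with hneg | hpos
    · -- ω.1 < 0
      obtain ⟨n₀, hn₀def⟩ : ∃ n : ℤ, n = ⌊-(p.1 - θ.1)⌋ := ⟨_, rfl⟩
      obtain ⟨u, hudef⟩ : ∃ u : ℝ, u = (p.1 - θ.1) + n₀ := ⟨_, rfl⟩
      have hu1 : u ≤ 0 := by
        rw [hudef, hn₀def]
        have := Int.floor_le (-(p.1 - θ.1))
        linarith
      have hu2 : -1 < u := by
        rw [hudef, hn₀def]
        have := Int.sub_one_lt_floor (-(p.1 - θ.1))
        linarith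
      obtain ⟨k, m, hk, hkm⟩ := hC₂ ε ⟨hε, hε1⟩ ((p.2 - θ.2) - α * u)
      refine ⟨(u - k) / ω.1, Set.mem_Icc.mpr ⟨?_, ?_⟩, (k - n₀, m), ?_⟩
      · have hk0 : (0:ℝ) ≤ (k:ℕ) := Nat.cast_nonneg k
        rw [show (u - (k:ℝ)) / ω.1 = (-(u - (k:ℝ))) / (-ω.1) from (neg_div_neg_eq _ _).symm]
        apply div_nonneg (by linarith) (by linarith)
      · have hs : (u - k) / ω.1 = ((k:ℝ) - u) / |ω.1| := by
          rw [abs_of_neg hneg]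
          rw [div_neg, ← neg_div, neg_sub]
        rw [hs]
        have hCC : C₂ ≤ C := by rw [hCdef]; exact le_max_right _ _
        have hkC : (k:ℝ) ≤ C / ε ^ τ := by
          refine hk.trans ?_
          gcongr
        calc ((k:ℝ) - u) / |ω.1| ≤ ((k:ℝ) + 1) / |ω.1| :=
              (div_le_div_iff_of_pos_right hω1pos).mpr (by linarith)
          _ ≤ ((1 + C) / |ω.1| + 1) / ε ^ τ := hbub k (Nat.cast_nonneg k) hkC
      · have hω1s : ω.1 * ((u - k) / ω.1) = u - k := by field_simp
        have e1 : p.1 - (θ.1 + ω.1 * ((u - k) / ω.1)) - (((k - n₀ : ℤ)) : ℝ) = 0 := by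
          rw [hω1s, hudef]
          push_cast
          ring
        have hω2s : ω.2 * ((u - k) / ω.1) = α * (u - k) := by
          rw [hαdef]; field_simp
        have e2 : p.2 - (θ.2 + ω.2 * ((u - k) / ω.1)) - (m : ℝ)
            = ((p.2 - θ.2) - α * u) - (k:ℝ) * (-α) - (m:ℝ) := by
          rw [hω2s]; ring
        dsimp only
        rw [e1, e2, abs_zero, zero_add]
        exact hkm
    · -- ω.1 > 0
      obtain ⟨n₀, hn₀def⟩ : ∃ n : ℤ, n = ⌈-(p.1 - θ.1)⌉ := ⟨_, rfl⟩
      obtain ⟨u, hudef⟩ : ∃ u : ℝ, u = (p.1 - θ.1) + n₀ := ⟨_, rfl⟩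
      have hu1 : 0 ≤ u := by
        rw [hudef, hn₀def]
        have := Int.le_ceil (-(p.1 - θ.1))
        linarith
      have hu2 : u < 1 := by
        rw [hudef, hn₀def]
        have := Int.ceil_lt_add_one (-(p.1 - θ.1))
        linarith
      obtain ⟨k, m, hk, hkm⟩ := hC₁ ε ⟨hε, hε1⟩ ((p.2 - θ.2) - α * u)
      refine ⟨(u + k) / ω.1, Set.mem_Icc.mpr ⟨?_, ?_⟩, (-(n₀ + k), m), ?_⟩
      · apply div_nonneg _ hpos.le
        have : (0:ℝ) ≤ k := Nat.cast_nonneg k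
        linarith
      · have hs : (u + k) / ω.1 = (u + k) / |ω.1| := by rw [abs_of_pos hpos]
        rw [hs]
        have hCC : C₁ ≤ C := by rw [hCdef]; exact le_max_left _ _
        have hkC : (k:ℝ) ≤ C / ε ^ τ := by
          refine hk.trans ?_
          gcongr
        calc (u + (k:ℝ)) / |ω.1| ≤ ((k:ℝ) + 1) / |ω.1| :=
              (div_le_div_iff_of_pos_right hω1pos).mpr (by linarith)
          _ ≤ ((1 + C) / |ω.1| + 1) / ε ^ τ := hbub k (Nat.cast_nonneg k) hkC
      · have hω1s : ω.1 * ((u + k) / ω.1) = u + k := by field_simp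
        have e1 : p.1 - (θ.1 + ω.1 * ((u + k) / ω.1)) - (((-(n₀ + k) : ℤ)) : ℝ) = 0 := by
          rw [hω1s, hudef]
          push_cast
          ring
        have hω2s : ω.2 * ((u + k) / ω.1) = α * (u + k) := by
          rw [hαdef]; field_simp
        have e2 : p.2 - (θ.2 + ω.2 * ((u + k) / ω.1)) - (m : ℝ)
            = ((p.2 - θ.2) - α * u) - (k:ℝ) * α - (m:ℝ) := by
          rw [hω2s]; ring
        dsimp only
        rw [e1, e2, abs_zero, zero_add]
        exact hkm
  · -- ε > 1 : trivial via rounding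
    push_neg at hε1
    refine ⟨0, Set.mem_Icc.mpr ⟨le_refl 0, by positivity⟩, (round (p.1 - θ.1), round (p.2 - θ.2)), ?_⟩
    have h1 : |p.1 - (θ.1 + ω.1 * 0) - (round (p.1 - θ.1) : ℝ)| ≤ 1/2 := by
      rw [mul_zero, add_zero]
      exact abs_sub_round _
    have h2 : |p.2 - (θ.2 + ω.2 * 0) - (round (p.2 - θ.2) : ℝ)| ≤ 1/2 := by
      rw [mul_zero, add_zero]
      exact abs_sub_round _
    dsimp only
    linarith
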